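/- For a connected ribbon graph with V vertices, E edges, F faces (F = number of cycles of σ₂ = σ₀^{−1}σ₁), the genus g of its surface of embedding, defined by 2 − 2g = V − E + F, satisfies g ≥ 0, i.e. V − E + F ≤ 2. -/

import Mathlib

/-- The number of cycles of a permutation, counting fixed points as 1-cycles. -/
def numCycles {H : Type*} [Fintype H] [DecidableEq H] (σ : Equiv.Perm H) : ℕ :=
  σ.cycleType.card + (Fintype.card H - σ.support.card)

open Equiv Equiv.Perm Relation

set_option linter.unusedSectionVars false

namespace RGaux

variable {H : Type*} [Fintype H] [DecidableEq H]

/-! ### Counting classes of setoids -/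

/-- number of classes of a setoid. -/
noncomputable def ncl (s : Setoid H) : ℕ := Nat.card (Quotient s)

lemma ncl_le_of_le {s t : Setoid H} (h : ∀ x y, s.r x y → t.r x y) :
    ncl t ≤ ncl s := by
  have : Function.Surjective (Quotient.map' (s₁ := s) (s₂ := t) id (fun x y hxy => h x y hxy)) := by
    intro q
    obtain ⟨x, rfl⟩ := Quotient.exists_rep q
    exact ⟨Quotient.mk s x, rfl⟩
  exact Nat.card_le_card_of_surjective _ this

/-- join of a setoid with one extra pair `a ~ b`. -/
def joinSetoid (s : Setoid H) (a b : H) : Setoid H where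
  r x y := s.r x y ∨ ((s.r x a ∨ s.r x b) ∧ (s.r y a ∨ s.r y b))
  iseqv := by
    constructor
    · intro x; exact Or.inl (s.refl x)
    · rintro x y (h | ⟨h1, h2⟩)
      · exact Or.inl (s.symm h)
      · exact Or.inr ⟨h2, h1⟩
    · rintro x y z (h | ⟨h1, h2⟩) (h' | ⟨h1', h2'⟩)
      · exact Or.inl (s.trans h h')
      · exact Or.inr ⟨h1'.imp (fun q => s.trans h q) (fun q => s.trans h q), h2'⟩
      · exact Or.inr ⟨h1, h2.imp (fun q => s.trans (s.symm h') q) (fun q => s.trans (s.symm h') q)⟩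
      · exact Or.inr ⟨h1, h2'⟩

lemma joinSetoid_le (s : Setoid H) (a b : H) (x y : H) (h : s.r x y) :
    (joinSetoid s a b).r x y := Or.inl h

lemma joinSetoid_pair (s : Setoid H) (a b : H) : (joinSetoid s a b).r a b :=
  Or.inr ⟨Or.inl (s.refl a), Or.inr (s.refl b)⟩

/-- collapsing: if `a ~ b` already, the join is no bigger. -/
lemma joinSetoid_eq_of_rel {s : Setoid H} {a b : H} (hab : s.r a b) {x y : H}
    (h : (joinSetoid s a b).r x y) : s.r x y := by
  rcases h with h | ⟨h1, h2⟩
  · exact h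
  · have hx : s.r x a := h1.elim id (fun q => s.trans q (s.symm hab))
    have hy : s.r y a := h2.elim id (fun q => s.trans q (s.symm hab))
    exact s.trans hx (s.symm hy)

lemma ncl_le_joinSetoid_add_one (s : Setoid H) (a b : H) :
    ncl s ≤ ncl (joinSetoid s a b) + 1 := by
  classical
  set t := joinSetoid s a b
  let f : {q : Quotient s // q ≠ Quotient.mk s b} → Quotient t :=
    fun q => Quotient.map' id (fun x y hxy => joinSetoid_le s a b x y hxy) q.1
  have hf : Function.Injective f := by
    rintro ⟨q1, hq1⟩ ⟨q2, hq2⟩ h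
    obtain ⟨x, rfl⟩ := Quotient.exists_rep q1
    obtain ⟨y, rfl⟩ := Quotient.exists_rep q2
    simp only [f, Quotient.map'_mk''] at h
    have hxy : t.r x y := Quotient.exact' h
    rcases hxy with h' | ⟨h1, h2⟩
    · exact Subtype.ext (Quotient.sound h')
    · have hx : s.r x a := by
        rcases h1 with h1 | h1
        · exact h1
        · exact absurd (Quotient.sound h1) hq1
      have hy : s.r y a := by
        rcases h2 with h2 | h2
        · exact h2
        · exact absurd (Quotient.sound h2) hq2
      exact Subtype.ext (Quotient.sound (s.trans hx (s.symm hy)))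
  have h1 : Nat.card {q : Quotient s // q ≠ Quotient.mk s b} ≤ ncl t :=
    Nat.card_le_card_of_injective f hf
  have h2 : ncl s ≤ Nat.card {q : Quotient s // q ≠ Quotient.mk s b} + 1 := by
    have : Nat.card {q : Quotient s // q ≠ Quotient.mk s b}
        = Fintype.card {q : Quotient s // q ≠ Quotient.mk s b} := Nat.card_eq_fintype_card
    rw [this, ncl, Nat.card_eq_fintype_card, Fintype.card_subtype_compl]
    have := Fintype.card_subtype_eq (α := Quotient s) (Quotient.mk s b)
    omega
  omega

/-- gluing two genuinely distinct classes loses at least one class. -/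
lemma ncl_add_one_le_of_glue {s t : Setoid H} (h : ∀ x y, s.r x y → t.r x y)
    {a b : H} (hab : t.r a b) (hnab : ¬ s.r a b) : ncl t + 1 ≤ ncl s := by
  classical
  let f : Quotient t → {q : Quotient s // q ≠ Quotient.mk s b} := by
    intro q
    by_cases hq : q = Quotient.mk t b
    · exact ⟨Quotient.mk s a, fun hc => hnab (Quotient.exact hc)⟩
    · refine ⟨Quotient.mk s (Quotient.out q), fun hc => hq ?_⟩
      have : t.r (Quotient.out q) b := h _ _ (Quotient.exact hc)
      rw [← Quotient.out_eq q]
      exact Quotient.sound this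
  have hf : Function.Injective f := by
    intro q1 q2 hq
    by_cases h1 : q1 = Quotient.mk t b <;> by_cases h2 : q2 = Quotient.mk t b
    · rw [h1, h2]
    · exfalso
      simp only [f, dif_pos h1, dif_neg h2, Subtype.mk.injEq] at hq
      have : t.r a (Quotient.out q2) := h _ _ (Quotient.exact hq)
      apply h2
      rw [← Quotient.out_eq q2]
      exact (Quotient.sound ((t.trans (t.symm this) hab)) : Quotient.mk t _ = _)
    · exfalso
      simp only [f, dif_neg h1, dif_pos h2, Subtype.mk.injEq] at hq
      have : t.r (Quotient.out q1) a := h _ _ (Quotient.exact hq)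
      apply h1
      rw [← Quotient.out_eq q1]
      exact (Quotient.sound (t.trans this hab) : Quotient.mk t _ = _)
    · simp only [f, dif_neg h1, dif_neg h2, Subtype.mk.injEq] at hq
      have : t.r (Quotient.out q1) (Quotient.out q2) := h _ _ (Quotient.exact hq)
      rw [← Quotient.out_eq q1, ← Quotient.out_eq q2]
      exact Quotient.sound this
  have h1 : ncl t ≤ Nat.card {q : Quotient s // q ≠ Quotient.mk s b} :=
    Nat.card_le_card_of_injective f hf
  have h2 : Nat.card {q : Quotient s // q ≠ Quotient.mk s b} + 1 = ncl s := by
    have : Nat.card {q : Quotient s // q ≠ Quotient.mk s b}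
        = Fintype.card {q : Quotient s // q ≠ Quotient.mk s b} := Nat.card_eq_fintype_card
    rw [this, ncl, Nat.card_eq_fintype_card, Fintype.card_subtype_compl]
    have h3 := Fintype.card_subtype_eq (α := Quotient s) (Quotient.mk s b)
    have h4 : 0 < Fintype.card (Quotient s) := Fintype.card_pos_iff.mpr ⟨Quotient.mk s b⟩
    have h5 : (1 : ℕ) ≤ Fintype.card (Quotient s) :=
      Fintype.card_pos_iff.mpr ⟨Quotient.mk s b⟩
    omega
  omega

lemma ncl_eq_one_of_all [Nonempty H] {s : Setoid H} (h : ∀ x y, s.r x y) : ncl s = 1 := by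
  rw [ncl, Nat.card_eq_one_iff_unique]
  constructor
  · constructor
    intro q1 q2
    obtain ⟨x, rfl⟩ := Quotient.exists_rep q1
    obtain ⟨y, rfl⟩ := Quotient.exists_rep q2
    exact Quotient.sound (h x y)
  · exact ⟨Quotient.mk s (Classical.arbitrary H)⟩

/-! ### The same-cycle setoid and its class count -/

def scSetoid (σ : Equiv.Perm H) : Setoid H :=
  ⟨σ.SameCycle, ⟨fun _ => Equiv.Perm.SameCycle.refl σ _, fun h => h.symm, fun h h' => h.trans h'⟩⟩

lemma sameCycle_fixed {σ : Equiv.Perm H} {x y : H} (hx : σ x = x)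
    (h : σ.SameCycle x y) : x = y := by
  obtain ⟨i, hi⟩ := h
  rw [zpow_apply_eq_self_of_apply_eq_self hx] at hi
  exact hi

/-- the class map distinguishing cycles. -/
def gmap (σ : Equiv.Perm H) (x : H) : Equiv.Perm H ⊕ H :=
  if σ x = x then Sum.inr x else Sum.inl (σ.cycleOf x)

lemma gmap_eq_iff (σ : Equiv.Perm H) (x y : H) :
    gmap σ x = gmap σ y ↔ σ.SameCycle x y := by
  classical
  unfold gmap
  by_cases hx : σ x = x <;> by_cases hy : σ y = y
  · rw [if_pos hx, if_pos hy, Sum.inr.injEq]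
    constructor
    · rintro rfl; exact Equiv.Perm.SameCycle.refl σ x
    · exact fun h => sameCycle_fixed hx h
  · rw [if_pos hx, if_neg hy]
    constructor
    · intro h; exact absurd h (by simp)
    · intro h; exact absurd (sameCycle_fixed hx h) (by rintro rfl; exact hy hx)
  · rw [if_neg hx, if_pos hy]
    constructor
    · intro h; exact absurd h (by simp)
    · intro h; exact absurd (sameCycle_fixed hy h.symm) (by rintro rfl; exact hx hy)
  · rw [if_neg hx, if_neg hy, Sum.inl.injEq]
    constructor
    · intro h
      have hy' : y ∈ (σ.cycleOf y).support := by
        rw [Equiv.Perm.mem_support_cycleOf_iff]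
        exact ⟨Equiv.Perm.SameCycle.refl σ y, Equiv.Perm.mem_support.mpr hy⟩
      rw [← h, Equiv.Perm.mem_support_cycleOf_iff] at hy'
      exact hy'.1
    · exact fun h => h.cycleOf_eq

lemma ncl_scSetoid (σ : Equiv.Perm H) : ncl (scSetoid σ) = numCycles σ := by
  classical
  have key : ncl (scSetoid σ) = (Finset.univ.image (gmap σ)).card := by
    rw [ncl, ← Nat.card_eq_finsetCard]
    apply Nat.card_eq_of_bijective
      (f := fun q => Quotient.liftOn' q
        (fun x => (⟨gmap σ x, Finset.mem_image_of_mem _ (Finset.mem_univ x)⟩ :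
          (Finset.univ.image (gmap σ) : Finset (Equiv.Perm H ⊕ H))))
        (fun x y hxy => Subtype.ext ((gmap_eq_iff σ x y).mpr hxy)))
    constructor
    · intro q1 q2 h
      obtain ⟨x, rfl⟩ := Quotient.exists_rep q1
      obtain ⟨y, rfl⟩ := Quotient.exists_rep q2
      exact Quotient.sound ((gmap_eq_iff σ x y).mp (congrArg Subtype.val h))
    · rintro ⟨v, hv⟩
      rw [Finset.mem_image] at hv
      obtain ⟨x, _, rfl⟩ := hv
      exact ⟨Quotient.mk _ x, rfl⟩
  rw [key]
  have himg : Finset.univ.image (gmap σ) =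
      (σ.support.image fun x => (Sum.inl (σ.cycleOf x) : Equiv.Perm H ⊕ H)) ∪
      (σ.supportᶜ.image fun x => (Sum.inr x : Equiv.Perm H ⊕ H)) := by
    ext v
    simp only [Finset.mem_image, Finset.mem_union, Finset.mem_univ, true_and, Finset.mem_compl,
      Equiv.Perm.mem_support, not_not]
    constructor
    · rintro ⟨x, rfl⟩
      unfold gmap
      by_cases hx : σ x = x
      · rw [if_pos hx]; exact Or.inr ⟨x, hx, rfl⟩
      · rw [if_neg hx]; exact Or.inl ⟨x, hx, rfl⟩
    · rintro (⟨x, hx, rfl⟩ | ⟨x, hx, rfl⟩)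
      · exact ⟨x, by unfold gmap; rw [if_neg hx]⟩
      · exact ⟨x, by unfold gmap; rw [if_pos hx]⟩
  rw [himg, Finset.card_union_of_disjoint]
  · have h1 : σ.support.image (fun x => (Sum.inl (σ.cycleOf x) : Equiv.Perm H ⊕ H))
        = σ.cycleFactorsFinset.image Sum.inl := by
      ext v
      simp only [Finset.mem_image]
      constructor
      · rintro ⟨x, hx, rfl⟩
        exact ⟨σ.cycleOf x, Equiv.Perm.cycleOf_mem_cycleFactorsFinset_iff.mpr hx, rfl⟩
      · rintro ⟨c, hc, rfl⟩
        obtain ⟨x, hx⟩ := (Equiv.Perm.mem_cycleFactorsFinset_iff.mp hc).1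
        have hxc : x ∈ c.support := Equiv.Perm.mem_support.mpr hx.1
        have := Equiv.Perm.cycle_is_cycleOf hxc hc
        refine ⟨x, ?_, by rw [← this]⟩
        have hsub : c.support ⊆ σ.support := Equiv.Perm.mem_cycleFactorsFinset_iff.mp hc
          |>.2 |> fun h2 => by
            intro z hz
            rw [Equiv.Perm.mem_support, ← h2 z hz]
            exact Equiv.Perm.mem_support.mp hz
        exact hsub hxc
    rw [h1, Finset.card_image_of_injective _ Sum.inl_injective,
      Finset.card_image_of_injective _ Sum.inr_injective, Finset.card_compl]
    rw [numCycles, Equiv.Perm.cycleType_def, Multiset.card_map]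
    rfl
  · rw [Finset.disjoint_left]
    rintro v hv hv'
    rw [Finset.mem_image] at hv hv'
    obtain ⟨x, _, rfl⟩ := hv
    obtain ⟨y, _, h⟩ := hv'
    exact Sum.inl_ne_inr h.symm

/-! ### Behaviour of the cycle relation under a transposition -/

/-- if a setoid relates every point to its image, it absorbs the same-cycle relation. -/
lemma invariant_of_rel_apply {σ : Equiv.Perm H} {s : Setoid H} (h : ∀ z, s.r z (σ z))
    {x y : H} (hxy : σ.SameCycle x y) : s.r x y := by
  obtain ⟨i, hi⟩ := hxy
  subst hi
  have hinv : ∀ z, s.r z (σ⁻¹ z) := fun z => by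
    have := h (σ⁻¹ z)
    rw [← Equiv.Perm.mul_apply, mul_inv_cancel, Equiv.Perm.one_apply] at this
    exact s.symm this
  induction i using Int.induction_on with
  | zero => exact s.refl x
  | succ n ih =>
    have : (σ ^ ((n : ℤ) + 1)) x = σ ((σ ^ (n : ℤ)) x) := by
      rw [add_comm, zpow_add, zpow_one]; rfl
    rw [this]
    exact s.trans ih (h _)
  | pred n ih =>
    have : (σ ^ (-(n : ℤ) - 1)) x = σ⁻¹ ((σ ^ (-(n : ℤ))) x) := by
      rw [sub_eq_add_neg, add_comm, zpow_add, zpow_neg, zpow_one]; rfl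
    rw [this]
    exact s.trans ih (hinv _)

/-- the cycles of `σ * swap a b` refine the join of the cycles of `σ` with `a ~ b`. -/
lemma sameCycle_mul_swap_le_join {σ : Equiv.Perm H} {a b x y : H}
    (h : (σ * Equiv.swap a b).SameCycle x y) :
    (joinSetoid (scSetoid σ) a b).r x y := by
  apply invariant_of_rel_apply (σ := σ * Equiv.swap a b) _ h
  intro z
  by_cases hza : z = a
  · refine Or.inr ⟨Or.inl (hza ▸ Equiv.Perm.SameCycle.refl σ a), Or.inr ?_⟩
    show σ.SameCycle ((σ * Equiv.swap a b) z) b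
    rw [hza, Equiv.Perm.mul_apply, Equiv.swap_apply_left]
    exact ⟨-1, by simp⟩
  · by_cases hzb : z = b
    · refine Or.inr ⟨Or.inr (hzb ▸ Equiv.Perm.SameCycle.refl σ b), Or.inl ?_⟩
      show σ.SameCycle ((σ * Equiv.swap a b) z) a
      rw [hzb, Equiv.Perm.mul_apply, Equiv.swap_apply_right]
      exact ⟨-1, by simp⟩
    · refine Or.inl ?_
      show σ.SameCycle z ((σ * Equiv.swap a b) z)
      rw [Equiv.Perm.mul_apply, Equiv.swap_apply_of_ne_of_ne hza hzb]
      exact ⟨1, by simp⟩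

/-- if `a ~ b` already in `σ`, cycles of `σ * swap a b` refine cycles of `σ`. -/
lemma sameCycle_mul_swap_of_sameCycle {σ : Equiv.Perm H} {a b x y : H}
    (hab : σ.SameCycle a b) (h : (σ * Equiv.swap a b).SameCycle x y) :
    σ.SameCycle x y := by
  have := sameCycle_mul_swap_le_join (σ := σ) (a := a) (b := b) h
  rcases this with h' | ⟨h1, h2⟩
  · exact h'
  · have hx : σ.SameCycle x a := h1.elim id (fun q => q.trans hab.symm)
    have hy : σ.SameCycle y a := h2.elim id (fun q => q.trans hab.symm)
    exact hx.trans hy.symm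

/-- merging: if `a`, `b` are in different cycles of `σ`, they are in the same
cycle of `σ * swap a b`. -/
lemma sameCycle_mul_swap_of_not_sameCycle {σ : Equiv.Perm H} {a b : H}
    (hnab : ¬ σ.SameCycle a b) : (σ * Equiv.swap a b).SameCycle a b := by
  classical
  set ρ := σ * Equiv.swap a b with hρ
  by_contra hcon
  have hnb : ∀ j : ℕ, (ρ ^ j) a ≠ b := by
    intro j hj
    exact hcon ⟨(j : ℤ), by rw [zpow_natCast]; exact hj⟩
  have hab : a ≠ b := fun hc => hnab (hc ▸ Equiv.Perm.SameCycle.refl σ a)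
  have hper : ∃ m : ℕ, 0 < m ∧ (ρ ^ m) a = a := by
    refine ⟨orderOf ρ, orderOf_pos ρ, by rw [pow_orderOf_eq_one]; rfl⟩
  set m := Nat.find hper with hm
  obtain ⟨hm0, hma⟩ := Nat.find_spec hper
  have hmin : ∀ i, 0 < i → i < m → (ρ ^ i) a ≠ a := by
    intro i hi0 him hia
    exact Nat.find_min hper (hm ▸ him) ⟨hi0, hia⟩
  have claim : ∀ i, 1 ≤ i → i ≤ m → (σ ^ i) b = (ρ ^ i) a := by
    intro i
    induction i with
    | zero => omega
    | succ n ih =>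
      intro _ hnm
      by_cases hn : n = 0
      · subst hn
        show (σ ^ 1) b = (ρ ^ 1) a
        rw [pow_one, pow_one]
        show σ b = (σ * Equiv.swap a b) a
        rw [Equiv.Perm.mul_apply, Equiv.swap_apply_left]
      · have hn1 : 1 ≤ n := by omega
        have hrec := ih hn1 (by omega)
        have hne_a : (ρ ^ n) a ≠ a := hmin n (by omega) (by omega)
        have hne_b : (ρ ^ n) a ≠ b := hnb n
        have hstep : ρ ((ρ ^ n) a) = σ ((ρ ^ n) a) := by
          show (σ * Equiv.swap a b) ((ρ ^ n) a) = σ ((ρ ^ n) a)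
          rw [Equiv.Perm.mul_apply, Equiv.swap_apply_of_ne_of_ne hne_a hne_b]
        rw [pow_succ', pow_succ', Equiv.Perm.mul_apply, Equiv.Perm.mul_apply, hrec, hstep]
  have hfin : (σ ^ m) b = a := by rw [claim m (by omega) le_rfl]; exact hm ▸ hma
  refine hnab ⟨-(m : ℤ), ?_⟩
  rw [zpow_neg, zpow_natCast, ← hfin]
  simp

/-! ### Parity -/

lemma card_cycleType_le (σ : Equiv.Perm H) : σ.cycleType.card ≤ σ.support.card := by
  rw [← Equiv.Perm.sum_cycleType]
  calc σ.cycleType.card = σ.cycleType.card • 1 := by simp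
    _ ≤ σ.cycleType.sum := Multiset.card_nsmul_le_sum
        (fun x hx => le_trans (by norm_num) (Equiv.Perm.two_le_of_mem_cycleType hx))

lemma numCycles_le_card (σ : Equiv.Perm H) : numCycles σ ≤ Fintype.card H := by
  have h1 := card_cycleType_le σ
  have h2 : σ.support.card ≤ Fintype.card H := Finset.card_le_univ _
  rw [numCycles]; omega

lemma sign_eq_pow (σ : Equiv.Perm H) :
    (Equiv.Perm.sign σ : ℤ) = (-1) ^ (Fintype.card H - numCycles σ) := by
  have h1 := card_cycleType_le σ
  have h2 : σ.support.card ≤ Fintype.card H := Finset.card_le_univ _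
  have hsub : Fintype.card H - numCycles σ = σ.support.card - σ.cycleType.card := by
    rw [numCycles]; omega
  have hsum : σ.cycleType.sum = σ.support.card := Equiv.Perm.sum_cycleType σ
  have key : σ.support.card + σ.cycleType.card
      = (σ.support.card - σ.cycleType.card) + 2 * σ.cycleType.card := by omega
  rw [hsub, Equiv.Perm.sign_of_cycleType]
  push_cast
  rw [hsum, key, pow_add, pow_mul]
  norm_num

lemma even_add_of_pow_eq {a b : ℕ} (h : ((-1 : ℤ)) ^ a = (-1) ^ b) : Even (a + b) := by
  have : ((-1 : ℤ)) ^ (a + b) = 1 := by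
    rw [pow_add, h, ← pow_add, ← two_mul, pow_mul]
    norm_num
  rwa [neg_one_pow_eq_one_iff_even (by norm_num : (-1 : ℤ) ≠ 1)] at this

/-- parity: multiplying by a transposition changes the cycle count parity. -/
lemma numCycles_mul_swap_parity {σ : Equiv.Perm H} {a b : H} (hab : a ≠ b) :
    ¬ Even (numCycles (σ * Equiv.swap a b) + numCycles σ) := by
  intro hev
  have hs : (Equiv.Perm.sign (σ * Equiv.swap a b) : ℤ) = -(Equiv.Perm.sign σ : ℤ) := by
    rw [map_mul, Equiv.Perm.sign_swap hab]
    push_cast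
    ring
  rw [sign_eq_pow, sign_eq_pow] at hs
  have : ((-1 : ℤ)) ^ (Fintype.card H - numCycles (σ * Equiv.swap a b))
      = (-1) ^ ((Fintype.card H - numCycles σ) + 1) := by rw [pow_succ, hs]; ring
  have heven := even_add_of_pow_eq this
  have h1 := numCycles_le_card (σ * Equiv.swap a b)
  have h2 := numCycles_le_card (σ := σ)
  rcases heven with ⟨k, hk⟩
  rcases hev with ⟨l, hl⟩
  omega

/-! ### The four step lemmas -/

lemma numCycles_le_mul_swap_add_one (σ : Equiv.Perm H) {a b : H} (hab : a ≠ b) :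
    numCycles σ ≤ numCycles (σ * Equiv.swap a b) + 1 := by
  have h1 := ncl_le_joinSetoid_add_one (scSetoid σ) a b
  have h2 : ncl (joinSetoid (scSetoid σ) a b) ≤ ncl (scSetoid (σ * Equiv.swap a b)) :=
    ncl_le_of_le (fun x y h => sameCycle_mul_swap_le_join h)
  rw [ncl_scSetoid] at h1 h2
  omega

lemma mul_swap_swap (σ : Equiv.Perm H) (a b : H) :
    (σ * Equiv.swap a b) * Equiv.swap a b = σ := by
  rw [mul_assoc, Equiv.swap_mul_self, mul_one]

lemma numCycles_mul_swap_le_add_one (σ : Equiv.Perm H) {a b : H} (hab : a ≠ b) :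
    numCycles (σ * Equiv.swap a b) ≤ numCycles σ + 1 := by
  have := numCycles_le_mul_swap_add_one (σ * Equiv.swap a b) hab
  rwa [mul_swap_swap] at this

lemma numCycles_split {σ : Equiv.Perm H} {a b : H} (hab : a ≠ b) (hs : σ.SameCycle a b) :
    numCycles σ + 1 ≤ numCycles (σ * Equiv.swap a b) := by
  have hle : numCycles σ ≤ numCycles (σ * Equiv.swap a b) := by
    have := ncl_le_of_le (s := scSetoid (σ * Equiv.swap a b)) (t := scSetoid σ)
      (fun x y h => sameCycle_mul_swap_of_sameCycle hs h)
    rwa [ncl_scSetoid, ncl_scSetoid] at this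
  have hne := numCycles_mul_swap_parity (σ := σ) hab
  rcases Nat.even_or_odd (numCycles (σ * Equiv.swap a b) + numCycles σ) with h | h
  · exact absurd h hne
  · rcases h with ⟨k, hk⟩
    omega

lemma numCycles_merge {σ : Equiv.Perm H} {a b : H} (hab : a ≠ b) (hns : ¬ σ.SameCycle a b) :
    numCycles (σ * Equiv.swap a b) + 1 ≤ numCycles σ := by
  have hsc : (σ * Equiv.swap a b).SameCycle a b := sameCycle_mul_swap_of_not_sameCycle hns
  have := numCycles_split (σ := σ * Equiv.swap a b) hab hsc
  rwa [mul_swap_swap] at this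

/-! ### Lists of transpositions -/

def swapProd (L : List (H × H)) : Equiv.Perm H :=
  (L.map fun p => Equiv.swap p.1 p.2).prod

def pairRel (L : List (H × H)) : H → H → Prop :=
  fun x y => (x, y) ∈ L ∨ (y, x) ∈ L

def pairSetoid (L : List (H × H)) : Setoid H := Relation.EqvGen.setoid (pairRel L)

lemma pairSetoid_mono {L L' : List (H × H)} (h : ∀ p ∈ L', p ∈ L) {x y : H}
    (hxy : (pairSetoid L').r x y) : (pairSetoid L).r x y := by
  refine Relation.EqvGen.mono ?_ x y hxy
  rintro u v (huv | huv)
  · exact Or.inl (h _ huv)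
  · exact Or.inr (h _ huv)

lemma swapProd_cons (p : H × H) (L : List (H × H)) :
    swapProd (p :: L) = Equiv.swap p.1 p.2 * swapProd L := by
  rw [swapProd, List.map_cons, List.prod_cons]; rfl

lemma pairSetoid_rel_apply (L : List (H × H)) (z : H) :
    (pairSetoid L).r z (swapProd L z) := by
  induction L generalizing z with
  | nil =>
    rw [swapProd]
    exact Relation.EqvGen.refl z
  | cons p L' ih =>
    have h1 : (pairSetoid (p :: L')).r z (swapProd L' z) :=
      pairSetoid_mono (fun q hq => List.mem_cons_of_mem p hq) (ih z)
    refine (pairSetoid (p :: L')).trans h1 ?_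
    rw [swapProd_cons, Equiv.Perm.mul_apply]
    by_cases h : swapProd L' z = p.1
    · rw [h, Equiv.swap_apply_left]
      exact Relation.EqvGen.rel _ _ (Or.inl List.mem_cons_self)
    · by_cases h' : swapProd L' z = p.2
      · rw [h', Equiv.swap_apply_right]
        exact Relation.EqvGen.rel _ _ (Or.inr List.mem_cons_self)
      · rw [Equiv.swap_apply_of_ne_of_ne h h']

lemma numCycles_one : numCycles (1 : Equiv.Perm H) = Fintype.card H := by
  rw [numCycles, Equiv.Perm.cycleType_one, Equiv.Perm.support_one]
  simp

lemma ncl_pairSetoid_nil : ncl (pairSetoid ([] : List (H × H))) = Fintype.card H := by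
  rw [ncl, ← Nat.card_eq_fintype_card]
  symm
  apply Nat.card_eq_of_bijective (f := Quotient.mk _)
  constructor
  · intro x y h
    have hxy := Quotient.exact h
    clear h
    induction hxy with
    | rel u v huv => exact absurd huv (by rintro (h | h) <;> simp [pairRel] at h)
    | refl => rfl
    | symm u v _ ih => exact ih.symm
    | trans u v w _ _ ih1 ih2 => exact ih1.trans ih2
  · exact fun q => Quotient.exists_rep q

lemma numCycles_mul_comm (u v : Equiv.Perm H) : numCycles (u * v) = numCycles (v * u) := by
  have h : u * v = u * (v * u) * u⁻¹ := by group
  rw [numCycles, numCycles, h, Equiv.Perm.cycleType_conj, Equiv.Perm.card_support_conj]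

/-- The core genus inequality, by induction on a transposition list. -/
lemma core (L : List (H × H)) (hL : ∀ p ∈ L, p.1 ≠ p.2) :
    numCycles (swapProd L) + Fintype.card H ≤ L.length + 2 * ncl (pairSetoid L) := by
  induction L with
  | nil =>
    rw [swapProd, List.map_nil, List.prod_nil, numCycles_one, ncl_pairSetoid_nil,
      List.length_nil]
    omega
  | cons p L' ih =>
    have hp : p.1 ≠ p.2 := hL p List.mem_cons_self
    have hL' : ∀ q ∈ L', q.1 ≠ q.2 := fun q hq => hL q (List.mem_cons_of_mem p hq)
    have ihL := ih hL'
    have hcomm : numCycles (swapProd (p :: L'))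
        = numCycles (swapProd L' * Equiv.swap p.1 p.2) := by
      rw [swapProd_cons, numCycles_mul_comm]
    by_cases hc : (pairSetoid L').r p.1 p.2
    · -- the pair is already connected: class count unchanged, cycle count varies by ≤ 1
      have hup : numCycles (swapProd L' * Equiv.swap p.1 p.2) ≤ numCycles (swapProd L') + 1 :=
        numCycles_mul_swap_le_add_one _ hp
      have hncl : ncl (pairSetoid L') ≤ ncl (pairSetoid (p :: L')) := by
        apply ncl_le_of_le (s := pairSetoid (p :: L')) (t := pairSetoid L')
        intro x y hxy
        refine Setoid.eqvGen_le ?_ hxy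
        rintro u v (huv | huv)
        · rcases List.mem_cons.mp huv with h | h
          · cases h; exact hc -- (u,v) = p
          · exact Relation.EqvGen.rel _ _ (Or.inl h)
        · rcases List.mem_cons.mp huv with h | h
          · cases h; exact (pairSetoid L').symm hc
          · exact Relation.EqvGen.rel _ _ (Or.inr h)
      rw [hcomm, List.length_cons]
      omega
    · -- new connection: cycle count drops by 1, class count drops by at most 1
      have hnsc : ¬ (swapProd L').SameCycle p.1 p.2 := fun hs =>
        hc (invariant_of_rel_apply (pairSetoid_rel_apply L') hs)
      have hdown := numCycles_merge hp hnsc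
      have hjoin : ncl (joinSetoid (pairSetoid L') p.1 p.2) ≤ ncl (pairSetoid (p :: L')) := by
        apply ncl_le_of_le (s := pairSetoid (p :: L')) (t := joinSetoid (pairSetoid L') p.1 p.2)
        intro x y hxy
        refine Setoid.eqvGen_le ?_ hxy
        rintro u v (huv | huv)
        · rcases List.mem_cons.mp huv with h | h
          · cases h; exact joinSetoid_pair _ _ _
          · exact joinSetoid_le _ _ _ _ _ (Relation.EqvGen.rel _ _ (Or.inl h))
        · rcases List.mem_cons.mp huv with h | h
          · cases h; exact (joinSetoid _ _ _).symm (joinSetoid_pair _ _ _)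
          · exact joinSetoid_le _ _ _ _ _ (Relation.EqvGen.rel _ _ (Or.inr h))
      have hstep := ncl_le_joinSetoid_add_one (pairSetoid L') p.1 p.2
      rw [hcomm, List.length_cons]
      omega

/-- Decomposition of a permutation into transpositions along its cycles. -/
lemma dec (σ : Equiv.Perm H) : ∃ L : List (H × H), swapProd L = σ ∧
    L.length + numCycles σ = Fintype.card H ∧ (∀ p ∈ L, p.1 ≠ p.2) ∧
    ∀ z, (pairSetoid L).r z (σ z) := by
  generalize hn : σ.support.card = n
  induction n using Nat.strong_induction_on generalizing σ with
  | _ n ih =>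
  by_cases hσ : σ = 1
  · subst hσ
    refine ⟨[], by rw [swapProd]; rfl, by rw [numCycles_one]; simp, by simp, ?_⟩
    intro z
    exact Relation.EqvGen.refl _
  · have hx : ∃ x, σ x ≠ x := by
      by_contra hfix
      push_neg at hfix
      exact hσ (Equiv.ext fun x => (hfix x).trans rfl)
    obtain ⟨x, hx⟩ := hx
    have hne : x ≠ σ x := fun h => hx h.symm
    set σ' := Equiv.swap x (σ x) * σ with hσ'
    have hlt : σ'.support.card < n := hn ▸ Equiv.Perm.card_support_swap_mul hx
    have hback : σ = Equiv.swap x (σ x) * σ' := by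
      rw [hσ', ← mul_assoc, Equiv.swap_mul_self, one_mul]
    have hsame : σ.SameCycle x (σ x) := ⟨1, by simp⟩
    have hnum : numCycles σ' = numCycles σ + 1 := by
      have hcm : numCycles σ' = numCycles (σ * Equiv.swap x (σ x)) := by
        rw [hσ', numCycles_mul_comm]
      have hs1 := numCycles_split hne hsame
      have hs2 := numCycles_mul_swap_le_add_one σ hne
      omega
    obtain ⟨L', hL'prod, hL'len, hL'ne, hL'rel⟩ := ih σ'.support.card hlt σ' rfl
    refine ⟨(x, σ x) :: L', ?_, ?_, ?_, ?_⟩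
    · rw [swapProd_cons, hL'prod, ← hback]
    · rw [List.length_cons]
      omega
    · rintro q hq
      rcases List.mem_cons.mp hq with h | h
      · cases h; exact hne
      · exact hL'ne q h
    · intro z
      have h1 : (pairSetoid ((x, σ x) :: L')).r z (σ' z) :=
        pairSetoid_mono (fun q hq => List.mem_cons_of_mem _ hq) (hL'rel z)
      refine (pairSetoid _).trans h1 ?_
      have : σ z = Equiv.swap x (σ x) (σ' z) := by
        conv_lhs => rw [hback]
        exact Equiv.Perm.mul_apply _ _ _
      rw [this]
      by_cases h : σ' z = x
      · rw [h, Equiv.swap_apply_left]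
        exact Relation.EqvGen.rel _ _ (Or.inl List.mem_cons_self)
      · by_cases h' : σ' z = σ x
        · rw [h', Equiv.swap_apply_right]
          exact Relation.EqvGen.rel _ _ (Or.inr List.mem_cons_self)
        · rw [Equiv.swap_apply_of_ne_of_ne h h']

lemma numCycles_inv (σ : Equiv.Perm H) : numCycles σ⁻¹ = numCycles σ := by
  rw [numCycles, numCycles, Equiv.Perm.cycleType_inv, Equiv.Perm.support_inv]

/-- For a fixed-point-free involution, the number of cycles is half the cardinality,
and the cardinality is even. -/
lemma involution_facts {σ : Equiv.Perm H} (hinv : σ * σ = 1) (hfpf : ∀ h : H, σ h ≠ h) :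
    2 * numCycles σ = Fintype.card H := by
  have hsupp : σ.support = Finset.univ := by
    ext z; simp [Equiv.Perm.mem_support, hfpf z]
  have hcard : σ.support.card = Fintype.card H := by rw [hsupp]; exact Finset.card_univ
  have horder : orderOf σ ∣ 2 := orderOf_dvd_of_pow_eq_one (by rw [pow_two]; exact hinv)
  have hparts : ∀ p ∈ σ.cycleType, p = 2 := by
    intro p hp
    have h2 : 2 ≤ p := Equiv.Perm.two_le_of_mem_cycleType hp
    have hdvd : p ∣ 2 := (Equiv.Perm.dvd_of_mem_cycleType hp).trans horder
    exact le_antisymm (Nat.le_of_dvd (by norm_num) hdvd) h2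
  have hsum : σ.cycleType.sum = Fintype.card H := by
    rw [Equiv.Perm.sum_cycleType, hcard]
  have hrep : σ.cycleType = Multiset.replicate σ.cycleType.card 2 :=
    (Multiset.eq_replicate_card).mpr hparts
  have h2 : σ.cycleType.sum = 2 * σ.cycleType.card := by
    rw [hrep, Multiset.sum_replicate, Multiset.card_replicate]
    ring_nf
  rw [numCycles, hcard]
  omega

end RGaux

open RGaux in
/-- Euler-characteristic bound for connected ribbon graphs: with `V` the number of
cycles of `σ₀`, `E = |H|/2` (`σ₁` a fixed-point-free involution), `F` the number of
cycles of `σ₂ = σ₀⁻¹σ₁`, and connectedness meaning `⟨σ₀, σ₁⟩` acts transitively on the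
half-edges, one has `V - E + F ≤ 2` and `V - E + F` is even, i.e. the genus `g` defined
by `2 - 2g = V - E + F` is a nonnegative integer. -/
theorem stmt_7 {H : Type*} [Fintype H] [DecidableEq H] (σ₀ σ₁ : Equiv.Perm H)
    (hinv : σ₁ * σ₁ = 1) (hfpf : ∀ h : H, σ₁ h ≠ h)
    (htrans : ∀ a b : H, ∃ g ∈ Subgroup.closure ({σ₀, σ₁} : Set (Equiv.Perm H)), g a = b) :
    (numCycles σ₀ : ℤ) - (Fintype.card H / 2 : ℕ) + numCycles (σ₀⁻¹ * σ₁) ≤ 2 ∧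
    Even ((numCycles σ₀ : ℤ) - (Fintype.card H / 2 : ℕ) + numCycles (σ₀⁻¹ * σ₁)) := by
  classical
  rcases isEmpty_or_nonempty H with hem | hne
  · have h0 : Fintype.card H = 0 := Fintype.card_eq_zero
    have e0 : numCycles σ₀ = 0 := by have := numCycles_le_card (σ := σ₀); omega
    have e1 : numCycles (σ₀⁻¹ * σ₁) = 0 := by
      have := numCycles_le_card (σ := σ₀⁻¹ * σ₁); omega
    rw [e0, e1, h0]
    norm_num
  -- notation
  set n := Fintype.card H with hn
  obtain ⟨L0, h0prod, h0len, h0ne, h0rel⟩ := dec σ₀⁻¹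
  obtain ⟨L1, h1prod, h1len, h1ne, h1rel⟩ := dec σ₁
  set L := L0 ++ L1 with hL
  have hprod : swapProd L = σ₀⁻¹ * σ₁ := by
    rw [hL, swapProd, List.map_append, List.prod_append, ← h0prod, ← h1prod]; rfl
  have hLne : ∀ p ∈ L, p.1 ≠ p.2 := by
    intro p hp
    rcases List.mem_append.mp hp with h | h
    · exact h0ne p h
    · exact h1ne p h
  -- connectivity
  have hncl : ncl (pairSetoid L) = 1 := by
    apply ncl_eq_one_of_all
    have hm0 : ∀ {x y : H}, (pairSetoid L0).r x y → (pairSetoid L).r x y :=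
      fun h => pairSetoid_mono (fun q hq => List.mem_append_left _ hq) h
    have hm1 : ∀ {x y : H}, (pairSetoid L1).r x y → (pairSetoid L).r x y :=
      fun h => pairSetoid_mono (fun q hq => List.mem_append_right _ hq) h
    have hR0 : ∀ z, (pairSetoid L).r z (σ₀ z) := by
      intro z
      have := hm0 (h0rel (σ₀ z))
      rw [← Equiv.Perm.mul_apply, inv_mul_cancel, Equiv.Perm.one_apply] at this
      exact (pairSetoid L).symm this
    have hR1 : ∀ z, (pairSetoid L).r z (σ₁ z) := fun z => hm1 (h1rel z)
    have hall : ∀ g ∈ Subgroup.closure ({σ₀, σ₁} : Set (Equiv.Perm H)),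
        ∀ z : H, (pairSetoid L).r z (g z) := by
      intro g hg
      induction hg using Subgroup.closure_induction with
      | mem u hu =>
        rcases hu with h | h
        · subst h; exact hR0
        · subst h; exact hR1
      | one => intro z; exact (pairSetoid L).refl z
      | mul u v hu hv ihu ihv =>
        intro z
        exact (pairSetoid L).trans (ihv z) (ihu (v z))
      | inv u hu ihu =>
        intro z
        have := ihu (u⁻¹ z)
        rw [← Equiv.Perm.mul_apply, mul_inv_cancel, Equiv.Perm.one_apply] at this
        exact (pairSetoid L).symm this
    intro x y
    obtain ⟨g, hg, hgx⟩ := htrans x y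
    exact hgx ▸ hall g hg x
  -- the core inequality
  have hcore := core L hLne
  rw [hprod, hncl] at hcore
  have hlen : L.length = L0.length + L1.length := List.length_append
  -- numbers
  have hV : numCycles σ₀⁻¹ = numCycles σ₀ := numCycles_inv σ₀
  have hE : 2 * numCycles σ₁ = n := involution_facts hinv hfpf
  have hhalf : n / 2 = numCycles σ₁ := by omega
  -- parity
  have hsign : ((-1 : ℤ)) ^ (n - numCycles (σ₀⁻¹ * σ₁))
      = (-1) ^ ((n - numCycles σ₀⁻¹) + (n - numCycles σ₁)) := by
    rw [pow_add, ← sign_eq_pow, ← sign_eq_pow, ← sign_eq_pow, map_mul]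
    push_cast
    ring
  have heven := even_add_of_pow_eq hsign
  have hb0 := numCycles_le_card (σ := σ₀⁻¹)
  have hb1 := numCycles_le_card (σ := σ₁)
  have hbF := numCycles_le_card (σ := σ₀⁻¹ * σ₁)
  rcases heven with ⟨k, hk⟩
  constructor
  · rw [hhalf]
    push_cast
    omega
  · rw [hhalf, Int.even_iff]
    push_cast
    omega
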